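/- For nonnegative integers m, n with gcd(m - n, m + n) = 1 and m + n odd, write m + n = 2t + 1. The crisscross graph R(m, n) has vertex set all triples (x, y, f) with -t ≤ x ≤ t, -t ≤ y ≤ t, f ∈ {1, 2}, and edges as follows: (x1,y1,1)~(x2,y2,1) iff (x2,y2) = (x1,y1) ± (m,n) or (x1,y1) ± (-n,m); (x1,y1,2)~(x2,y2,2) iff (x2,y2) = (x1,y1) ± (n,m) or (x1,y1) ± (-m,n); (x1,y1,f1)~(x2,y2,f2) with f1 ≠ f2 iff (x2,y2) = (x1,y1) ± (±m, m) or (x1,y1) ± (±n, n). Then R(m, n) is connected. -/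

import Mathlib

/-- Vertices of the crisscross graph with parameter `t`: triples `(x, y, f)` with
`-t ≤ x, y ≤ t` and a floor `f` (encoded as a `Bool`: `false` is the first floor,
`true` is the second floor). -/
abbrev CCVert (t : ℤ) := {u : ℤ × ℤ // -t ≤ u.1 ∧ u.1 ≤ t ∧ -t ≤ u.2 ∧ u.2 ≤ t} × Bool

/-- The adjacency conditions of the crisscross graph `R(m, n)`. -/
def CCRel (m n : ℤ) {t : ℤ} (u v : CCVert t) : Prop :=
  (u.2 = false ∧ v.2 = false ∧
    ((v.1.1.1 - u.1.1.1, v.1.1.2 - u.1.1.2) = ((m, n) : ℤ × ℤ) ∨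
     (v.1.1.1 - u.1.1.1, v.1.1.2 - u.1.1.2) = ((-m, -n) : ℤ × ℤ) ∨
     (v.1.1.1 - u.1.1.1, v.1.1.2 - u.1.1.2) = ((-n, m) : ℤ × ℤ) ∨
     (v.1.1.1 - u.1.1.1, v.1.1.2 - u.1.1.2) = ((n, -m) : ℤ × ℤ))) ∨
  (u.2 = true ∧ v.2 = true ∧
    ((v.1.1.1 - u.1.1.1, v.1.1.2 - u.1.1.2) = ((n, m) : ℤ × ℤ) ∨
     (v.1.1.1 - u.1.1.1, v.1.1.2 - u.1.1.2) = ((-n, -m) : ℤ × ℤ) ∨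
     (v.1.1.1 - u.1.1.1, v.1.1.2 - u.1.1.2) = ((-m, n) : ℤ × ℤ) ∨
     (v.1.1.1 - u.1.1.1, v.1.1.2 - u.1.1.2) = ((m, -n) : ℤ × ℤ))) ∨
  (u.2 ≠ v.2 ∧
    ((v.1.1.1 - u.1.1.1, v.1.1.2 - u.1.1.2) = ((m, m) : ℤ × ℤ) ∨
     (v.1.1.1 - u.1.1.1, v.1.1.2 - u.1.1.2) = ((-m, -m) : ℤ × ℤ) ∨
     (v.1.1.1 - u.1.1.1, v.1.1.2 - u.1.1.2) = ((-m, m) : ℤ × ℤ) ∨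
     (v.1.1.1 - u.1.1.1, v.1.1.2 - u.1.1.2) = ((m, -m) : ℤ × ℤ) ∨
     (v.1.1.1 - u.1.1.1, v.1.1.2 - u.1.1.2) = ((n, n) : ℤ × ℤ) ∨
     (v.1.1.1 - u.1.1.1, v.1.1.2 - u.1.1.2) = ((-n, -n) : ℤ × ℤ) ∨
     (v.1.1.1 - u.1.1.1, v.1.1.2 - u.1.1.2) = ((-n, n) : ℤ × ℤ) ∨
     (v.1.1.1 - u.1.1.1, v.1.1.2 - u.1.1.2) = ((n, -n) : ℤ × ℤ)))

/-- The crisscross graph `R(m, n)` (with `m + n = 2t + 1`).  The displacement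
conditions in `CCRel` are invariant under swapping the two endpoints, so
symmetrising does not change the edge set. -/
def crisscross (m n t : ℤ) : SimpleGraph (CCVert t) where
  Adj u v := u ≠ v ∧ (CCRel m n u v ∨ CCRel m n v u)
  symm := by
    constructor
    rintro u v ⟨h1, h2⟩
    exact ⟨h1.symm, h2.symm⟩
  loopless := ⟨fun u h => h.1 rfl⟩

set_option linter.unusedVariables false

namespace CCAux

/-- make a vertex -/
def mkV (t x y : ℤ) (h : -t ≤ x ∧ x ≤ t ∧ -t ≤ y ∧ y ≤ t) (f : Bool) : CCVert t :=
  (⟨(x, y), h⟩, f)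

lemma mkV_congr {t x y x' y' : ℤ} {h h'} {f f' : Bool} (e1 : x = x') (e2 : y = y')
    (e3 : f = f') : mkV t x y h f = mkV t x' y' h' f' := by
  subst e1; subst e2; subst e3; rfl

section Moves
variable {m n t : ℤ}

/-- S move, no wraps: displacement (-n,-n), cross, flips floor. -/
lemma adj_S00 (hm : 0 ≤ m) (hn : 0 ≤ n) (ht : m + n = 2 * t + 1) {x y : ℤ} (h : -t ≤ x ∧ x ≤ t ∧ -t ≤ y ∧ y ≤ t)
    (hbx : n - t ≤ x) (hby : n - t ≤ y) (f : Bool) :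
    (crisscross m n t).Adj (mkV t x y h f) (mkV t (x - n) (y - n) (by omega) (!f)) := by
  show _ ≠ _ ∧ (CCRel m n _ _ ∨ CCRel m n _ _)
  refine ⟨fun hEq => by simpa [mkV] using congrArg Prod.snd hEq, Or.inl ?_⟩
  refine Or.inr (Or.inr ⟨by simp [mkV], ?_⟩)
  simp only [mkV, Prod.mk.injEq]
  omega

/-- S move, both wrap: displacement (m,m), cross, flips floor. -/
lemma adj_S11 (hm : 0 ≤ m) (hn : 0 ≤ n) (ht : m + n = 2 * t + 1) {x y : ℤ} (h : -t ≤ x ∧ x ≤ t ∧ -t ≤ y ∧ y ≤ t)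
    (hbx : x < n - t) (hby : y < n - t) (f : Bool) :
    (crisscross m n t).Adj (mkV t x y h f) (mkV t (x + m) (y + m) (by omega) (!f)) := by
  show _ ≠ _ ∧ (CCRel m n _ _ ∨ CCRel m n _ _)
  refine ⟨fun hEq => by simpa [mkV] using congrArg Prod.snd hEq, Or.inl ?_⟩
  refine Or.inr (Or.inr ⟨by simp [mkV], ?_⟩)
  simp only [mkV, Prod.mk.injEq]
  omega

/-- S move, x wraps: displacement (m,-n), second floor. -/
lemma adj_S10 (hm : 0 ≤ m) (hn : 0 ≤ n) (ht : m + n = 2 * t + 1) {x y : ℤ} (h : -t ≤ x ∧ x ≤ t ∧ -t ≤ y ∧ y ≤ t)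
    (hbx : x < n - t) (hby : n - t ≤ y) :
    (crisscross m n t).Adj (mkV t x y h true) (mkV t (x + m) (y - n) (by omega) true) := by
  show _ ≠ _ ∧ (CCRel m n _ _ ∨ CCRel m n _ _)
  refine ⟨?_, Or.inl ?_⟩
  · intro hEq
    have h1 := congrArg (fun v => v.1.1.1) hEq
    have h2 := congrArg (fun v => v.1.1.2) hEq
    simp [mkV] at h1 h2
    omega
  · refine Or.inr (Or.inl ⟨rfl, rfl, ?_⟩)
    simp only [mkV, Prod.mk.injEq]
    omega

/-- S move, y wraps: displacement (-n,m), first floor. -/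
lemma adj_S01 (hm : 0 ≤ m) (hn : 0 ≤ n) (ht : m + n = 2 * t + 1) {x y : ℤ} (h : -t ≤ x ∧ x ≤ t ∧ -t ≤ y ∧ y ≤ t)
    (hbx : n - t ≤ x) (hby : y < n - t) :
    (crisscross m n t).Adj (mkV t x y h false) (mkV t (x - n) (y + m) (by omega) false) := by
  show _ ≠ _ ∧ (CCRel m n _ _ ∨ CCRel m n _ _)
  refine ⟨?_, Or.inl ?_⟩
  · intro hEq
    have h1 := congrArg (fun v => v.1.1.1) hEq
    have h2 := congrArg (fun v => v.1.1.2) hEq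
    simp [mkV] at h1 h2
    omega
  · refine Or.inl ⟨rfl, rfl, ?_⟩
    simp only [mkV, Prod.mk.injEq]
    omega

/-- T⁻¹ move, no wraps: displacement (n,-n), cross, flips floor. -/
lemma adj_Ti00 (hm : 0 ≤ m) (hn : 0 ≤ n) (ht : m + n = 2 * t + 1) {x y : ℤ} (h : -t ≤ x ∧ x ≤ t ∧ -t ≤ y ∧ y ≤ t)
    (hux : x ≤ t - n) (hby : n - t ≤ y) (f : Bool) :
    (crisscross m n t).Adj (mkV t x y h f) (mkV t (x + n) (y - n) (by omega) (!f)) := by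
  show _ ≠ _ ∧ (CCRel m n _ _ ∨ CCRel m n _ _)
  refine ⟨fun hEq => by simpa [mkV] using congrArg Prod.snd hEq, Or.inl ?_⟩
  refine Or.inr (Or.inr ⟨by simp [mkV], ?_⟩)
  simp only [mkV, Prod.mk.injEq]
  omega

/-- T⁻¹ move, both wrap: displacement (-m,m), cross, flips floor. -/
lemma adj_Ti11 (hm : 0 ≤ m) (hn : 0 ≤ n) (ht : m + n = 2 * t + 1) {x y : ℤ} (h : -t ≤ x ∧ x ≤ t ∧ -t ≤ y ∧ y ≤ t)
    (hux : t - n < x) (hby : y < n - t) (f : Bool) :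
    (crisscross m n t).Adj (mkV t x y h f) (mkV t (x - m) (y + m) (by omega) (!f)) := by
  show _ ≠ _ ∧ (CCRel m n _ _ ∨ CCRel m n _ _)
  refine ⟨fun hEq => by simpa [mkV] using congrArg Prod.snd hEq, Or.inl ?_⟩
  refine Or.inr (Or.inr ⟨by simp [mkV], ?_⟩)
  simp only [mkV, Prod.mk.injEq]
  omega

/-- T⁻¹ move, x wraps: displacement (-m,-n), first floor. -/
lemma adj_Ti10 (hm : 0 ≤ m) (hn : 0 ≤ n) (ht : m + n = 2 * t + 1) {x y : ℤ} (h : -t ≤ x ∧ x ≤ t ∧ -t ≤ y ∧ y ≤ t)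
    (hux : t - n < x) (hby : n - t ≤ y) :
    (crisscross m n t).Adj (mkV t x y h false) (mkV t (x - m) (y - n) (by omega) false) := by
  show _ ≠ _ ∧ (CCRel m n _ _ ∨ CCRel m n _ _)
  refine ⟨?_, Or.inl ?_⟩
  · intro hEq
    have h1 := congrArg (fun v => v.1.1.1) hEq
    have h2 := congrArg (fun v => v.1.1.2) hEq
    simp [mkV] at h1 h2
    omega
  · refine Or.inl ⟨rfl, rfl, ?_⟩
    simp only [mkV, Prod.mk.injEq]
    omega

/-- T⁻¹ move, y wraps: displacement (n,m), second floor. -/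
lemma adj_Ti01 (hm : 0 ≤ m) (hn : 0 ≤ n) (ht : m + n = 2 * t + 1) {x y : ℤ} (h : -t ≤ x ∧ x ≤ t ∧ -t ≤ y ∧ y ≤ t)
    (hux : x ≤ t - n) (hby : y < n - t) :
    (crisscross m n t).Adj (mkV t x y h true) (mkV t (x + n) (y + m) (by omega) true) := by
  show _ ≠ _ ∧ (CCRel m n _ _ ∨ CCRel m n _ _)
  refine ⟨?_, Or.inl ?_⟩
  · intro hEq
    have h1 := congrArg (fun v => v.1.1.1) hEq
    have h2 := congrArg (fun v => v.1.1.2) hEq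
    simp [mkV] at h1 h2
    omega
  · refine Or.inr (Or.inl ⟨rfl, rfl, ?_⟩)
    simp only [mkV, Prod.mk.injEq]
    omega

end Moves
end CCAux

namespace CCAux
section Orbit
variable {m n t : ℤ}

/-- subtract `n` modulo `m+n`, staying in `[-t, t]` -/
def rD (m n t x : ℤ) : ℤ := if n - t ≤ x then x - n else x + m

lemma rD_mem (hm : 0 ≤ m) (hn : 0 ≤ n) (ht : m + n = 2 * t + 1) {x : ℤ}
    (hx : -t ≤ x ∧ x ≤ t) : -t ≤ rD m n t x ∧ rD m n t x ≤ t := by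
  unfold rD; split <;> omega

lemma rD_shape (x : ℤ) : rD m n t x = x - n ∨ rD m n t x = x - n + (m + n) := by
  unfold rD; split
  · exact Or.inl rfl
  · exact Or.inr (by ring)

lemma iter_mem (hm : 0 ≤ m) (hn : 0 ≤ n) (ht : m + n = 2 * t + 1) {z : ℤ}
    (hz : -t ≤ z ∧ z ≤ t) : ∀ k : ℕ, -t ≤ (rD m n t)^[k] z ∧ (rD m n t)^[k] z ≤ t := by
  intro k
  induction k with
  | zero => simpa using hz
  | succ k ih =>
    rw [Function.iterate_succ_apply']
    exact rD_mem hm hn ht ih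

lemma iter_shape (z : ℤ) : ∀ k : ℕ, ∃ w : ℤ, (rD m n t)^[k] z = z - n * k + (m + n) * w := by
  intro k
  induction k with
  | zero => exact ⟨0, by simp⟩
  | succ k ih =>
    obtain ⟨w, hw⟩ := ih
    rw [Function.iterate_succ_apply']
    rcases rD_shape (m := m) (n := n) (t := t) ((rD m n t)^[k] z) with h | h
    · exact ⟨w, by rw [h, hw]; push_cast; ring⟩
    · exact ⟨w + 1, by rw [h, hw]; push_cast; ring⟩

lemma iter_period (hm : 0 ≤ m) (hn : 0 ≤ n) (ht : m + n = 2 * t + 1) {z : ℤ}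
    (hz : -t ≤ z ∧ z ≤ t) : (rD m n t)^[(m + n).toNat] z = z := by
  obtain ⟨w, hw⟩ := iter_shape (m := m) (n := n) (t := t) z (m + n).toNat
  have hQ : ((m + n).toNat : ℤ) = m + n := Int.toNat_of_nonneg (by omega)
  rw [hQ] at hw
  have hmem := iter_mem hm hn ht hz (m + n).toNat
  have hdvd : (m + n) ∣ ((rD m n t)^[(m + n).toNat] z - z) := ⟨w - n, by rw [hw]; ring⟩
  have : (rD m n t)^[(m + n).toNat] z - z = 0 :=
    Int.eq_zero_of_abs_lt_dvd hdvd (by rw [abs_lt]; omega)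
  omega

lemma iter_inj (hm : 0 ≤ m) (hn : 0 ≤ n) (ht : m + n = 2 * t + 1)
    (hc : IsCoprime (m + n) n) (z : ℤ) {j k : ℕ}
    (hj : j < (m + n).toNat) (hk : k < (m + n).toNat)
    (he : (rD m n t)^[j] z = (rD m n t)^[k] z) : j = k := by
  obtain ⟨w1, hw1⟩ := iter_shape (m := m) (n := n) (t := t) z j
  obtain ⟨w2, hw2⟩ := iter_shape (m := m) (n := n) (t := t) z k
  have hdvd : (m + n) ∣ n * ((j : ℤ) - (k : ℤ)) := ⟨w1 - w2, by
    rw [hw1, hw2] at he; linear_combination (-1 : ℤ) * he⟩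
  have hdvd2 : (m + n) ∣ ((j : ℤ) - (k : ℤ)) := hc.dvd_of_dvd_mul_left hdvd
  have : (j : ℤ) - (k : ℤ) = 0 := by
    refine Int.eq_zero_of_abs_lt_dvd hdvd2 ?_
    have hQ : ((m + n).toNat : ℤ) = m + n := Int.toNat_of_nonneg (by omega)
    rw [abs_lt]; omega
  omega

lemma iter_image (hm : 0 ≤ m) (hn : 0 ≤ n) (ht : m + n = 2 * t + 1)
    (hc : IsCoprime (m + n) n) {z : ℤ} (hz : -t ≤ z ∧ z ≤ t) :
    (Finset.range (m + n).toNat).image (fun k => (rD m n t)^[k] z) = Finset.Icc (-t) t := by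
  have hQ : ((m + n).toNat : ℤ) = m + n := Int.toNat_of_nonneg (by omega)
  apply Finset.eq_of_subset_of_card_le
  · intro w hw
    simp only [Finset.mem_image, Finset.mem_range] at hw
    obtain ⟨k, _, rfl⟩ := hw
    have := iter_mem hm hn ht hz k
    simp only [Finset.mem_Icc]
    omega
  · rw [Finset.card_image_of_injOn (fun a ha b hb hab =>
      iter_inj hm hn ht hc z (Finset.mem_range.mp ha) (Finset.mem_range.mp hb) hab)]
    rw [Finset.card_range, Int.card_Icc]
    omega

/-- transfer a filter-count from the interval to the orbit -/
lemma card_filter_orbit (hm : 0 ≤ m) (hn : 0 ≤ n) (ht : m + n = 2 * t + 1)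
    (hc : IsCoprime (m + n) n) {z : ℤ} (hz : -t ≤ z ∧ z ≤ t)
    (P : ℤ → Prop) [DecidablePred P] :
    ((Finset.range (m + n).toNat).filter (fun k => P ((rD m n t)^[k] z))).card
      = ((Finset.Icc (-t) t).filter P).card := by
  apply Finset.card_bij (fun k _ => (rD m n t)^[k] z)
  · intro k hk
    simp only [Finset.mem_filter, Finset.mem_range] at hk
    have := iter_mem hm hn ht hz k
    simp only [Finset.mem_filter, Finset.mem_Icc]
    exact ⟨by omega, hk.2⟩
  · intro a ha b hb hab
    simp only [Finset.mem_filter, Finset.mem_range] at ha hb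
    exact iter_inj hm hn ht hc z ha.1 hb.1 hab
  · intro w hw
    simp only [Finset.mem_filter] at hw
    have : w ∈ (Finset.range (m + n).toNat).image (fun k => (rD m n t)^[k] z) := by
      rw [iter_image hm hn ht hc hz]; exact hw.1
    simp only [Finset.mem_image, Finset.mem_range] at this
    obtain ⟨k, hk, hkw⟩ := this
    exact ⟨k, by simp only [Finset.mem_filter, Finset.mem_range]; exact ⟨hk, by rw [hkw]; exact hw.2⟩, hkw⟩

end Orbit
end CCAux

namespace CCAux
section Diag
variable {m n t : ℤ}

lemma diag_step (hm : 0 ≤ m) (hn : 0 ≤ n) (ht : m + n = 2 * t + 1) {z : ℤ}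
    (hz : -t ≤ z ∧ z ≤ t) (f : Bool) :
    (crisscross m n t).Adj (mkV t z z (by omega) f)
      (mkV t (rD m n t z) (rD m n t z)
        (by have := rD_mem hm hn ht hz; omega) (!f)) := by
  rcases le_or_gt (n - t) z with hb | hb
  · have e : mkV t (rD m n t z) (rD m n t z)
        (by have := rD_mem hm hn ht hz; omega) (!f)
        = mkV t (z - n) (z - n) (by omega) (!f) :=
      mkV_congr (by rw [rD, if_pos hb]) (by rw [rD, if_pos hb]) rfl
    rw [e]
    exact adj_S00 hm hn ht (by omega) hb hb f
  · have e : mkV t (rD m n t z) (rD m n t z)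
        (by have := rD_mem hm hn ht hz; omega) (!f)
        = mkV t (z + m) (z + m) (by omega) (!f) :=
      mkV_congr (by rw [rD, if_neg (by omega)]) (by rw [rD, if_neg (by omega)]) rfl
    rw [e]
    exact adj_S11 hm hn ht (by omega) hb hb f

lemma diag_iter (hm : 0 ≤ m) (hn : 0 ≤ n) (ht : m + n = 2 * t + 1) :
    ∀ (k : ℕ) (z : ℤ) (hz : -t ≤ z ∧ z ≤ t) (f : Bool),
    (crisscross m n t).Reachable (mkV t z z (by omega) f)
      (mkV t ((rD m n t)^[k] z) ((rD m n t)^[k] z)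
        (by have := iter_mem hm hn ht hz k; omega)
        (if k % 2 = 0 then f else !f)) := by
  intro k
  induction k with
  | zero => intro z hz f; exact SimpleGraph.Reachable.refl _
  | succ k ih =>
    intro z hz f
    have h1 : (crisscross m n t).Reachable (mkV t z z (by omega) f)
        (mkV t (rD m n t z) (rD m n t z)
          (by have := rD_mem hm hn ht hz; omega) (!f)) :=
      (diag_step hm hn ht hz f).reachable
    have h2 := ih (rD m n t z) (rD_mem hm hn ht hz) (!f)
    have e : mkV t ((rD m n t)^[k] (rD m n t z)) ((rD m n t)^[k] (rD m n t z))
        (by have := iter_mem hm hn ht (rD_mem hm hn ht hz) k; omega)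
        (if k % 2 = 0 then !f else !(!f))
        = mkV t ((rD m n t)^[k+1] z) ((rD m n t)^[k+1] z)
        (by have := iter_mem hm hn ht hz (k+1); omega)
        (if (k+1) % 2 = 0 then f else !f) := by
      refine mkV_congr ?_ ?_ ?_
      · rw [Function.iterate_succ_apply]
      · rw [Function.iterate_succ_apply]
      · rcases Nat.mod_two_eq_zero_or_one k with h | h <;>
          simp [h, Nat.add_mod, Bool.not_not]
    rw [e] at h2
    exact h1.trans h2

lemma reach_diag (hm : 0 ≤ m) (hn : 0 ≤ n) (ht : m + n = 2 * t + 1)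
    (hc : IsCoprime (m + n) n) {z : ℤ} (hz : -t ≤ z ∧ z ≤ t) (f : Bool) :
    (crisscross m n t).Reachable (mkV t 0 0 (by omega) false)
      (mkV t z z (by omega) f) := by
  have h0 : -t ≤ (0:ℤ) ∧ (0:ℤ) ≤ t := by omega
  have hzmem : z ∈ (Finset.range (m + n).toNat).image (fun k => (rD m n t)^[k] (0:ℤ)) := by
    rw [iter_image hm hn ht hc h0]
    simp only [Finset.mem_Icc]; omega
  simp only [Finset.mem_image, Finset.mem_range] at hzmem
  obtain ⟨k, hk, hkz⟩ := hzmem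
  have hQodd : (m + n).toNat % 2 = 1 := by
    have : ((m + n).toNat : ℤ) = 2 * t + 1 := by
      rw [Int.toNat_of_nonneg (by omega)]; omega
    omega
  -- choose k or k + Q according to parity
  rcases Nat.mod_two_eq_zero_or_one k with hpar | hpar
  · cases f with
    | false =>
      have := diag_iter hm hn ht k 0 h0 false
      rw [hpar] at this; simp only [if_pos rfl] at this
      exact this.trans (by rw [mkV_congr hkz hkz rfl]; exact SimpleGraph.Reachable.refl _)
    | true =>
      have := diag_iter hm hn ht (k + (m + n).toNat) 0 h0 false
      have hpar2 : (k + (m + n).toNat) % 2 = 1 := by omega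
      rw [hpar2] at this; simp only [one_ne_zero, if_false] at this
      have he : (rD m n t)^[k + (m + n).toNat] (0:ℤ) = z := by
        rw [Function.iterate_add_apply, iter_period hm hn ht h0, hkz]
      exact this.trans (by rw [mkV_congr he he rfl]; exact SimpleGraph.Reachable.refl _)
  · cases f with
    | true =>
      have := diag_iter hm hn ht k 0 h0 false
      rw [hpar] at this; simp only [one_ne_zero, if_false] at this
      exact this.trans (by rw [mkV_congr hkz hkz rfl]; exact SimpleGraph.Reachable.refl _)
    | false =>
      have := diag_iter hm hn ht (k + (m + n).toNat) 0 h0 false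
      have hpar2 : (k + (m + n).toNat) % 2 = 0 := by omega
      rw [hpar2] at this; simp only [if_pos rfl] at this
      have he : (rD m n t)^[k + (m + n).toNat] (0:ℤ) = z := by
        rw [Function.iterate_add_apply, iter_period hm hn ht h0, hkz]
      exact this.trans (by rw [mkV_congr he he rfl]; exact SimpleGraph.Reachable.refl _)

end Diag
end CCAux

namespace CCAux
section Main
variable {m n t : ℤ}

lemma main_induction (hm : 0 ≤ m) (hn : 0 ≤ n) (ht : m + n = 2 * t + 1)
    (hc : IsCoprime (m + n) n) :
    ∀ (j : ℕ) (x y : ℤ) (h : -t ≤ x ∧ x ≤ t ∧ -t ≤ y ∧ y ≤ t) (f : Bool),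
      (m + n) ∣ (y - x - 2 * n * j) →
      (crisscross m n t).Reachable (mkV t 0 0 (by omega) false) (mkV t x y h f) := by
  intro j
  induction j with
  | zero =>
    intro x y h f hdvd
    have hyx : y = x := by
      have h0 : (m + n) ∣ (y - x) := by simpa using hdvd
      have := Int.eq_zero_of_abs_lt_dvd h0 (by rw [abs_lt]; omega)
      omega
    have e : mkV t x y h f = mkV t x x (by omega) f := mkV_congr rfl hyx rfl
    rw [e]
    exact reach_diag hm hn ht hc ⟨h.1, h.2.1⟩ f
  | succ j ihj =>
    intro x y h f hdvd
    by_contra hbad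
    have hx : -t ≤ x ∧ x ≤ t := ⟨h.1, h.2.1⟩
    have hy : -t ≤ y ∧ y ≤ t := ⟨h.2.2.1, h.2.2.2⟩
    have hb : ∀ k : ℕ, -t ≤ (rD m n t)^[k] x ∧ (rD m n t)^[k] x ≤ t ∧ -t ≤ (rD m n t)^[k] y ∧ (rD m n t)^[k] y ≤ t := by
      intro k
      have h1 := iter_mem hm hn ht hx k
      have h2 := iter_mem hm hn ht hy k
      exact ⟨h1.1, h1.2, h2.1, h2.2⟩
    obtain ⟨c, hc0⟩ := hdvd
    have hdiag : ∀ k : ℕ, ∃ c' : ℤ,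
        (rD m n t)^[k] y - (rD m n t)^[k] x - 2 * n * ((j : ℤ) + 1) = (m + n) * c' := by
      intro k
      obtain ⟨w1, hw1⟩ := iter_shape (m := m) (n := n) (t := t) x k
      obtain ⟨w2, hw2⟩ := iter_shape (m := m) (n := n) (t := t) y k
      refine ⟨c + w2 - w1, ?_⟩
      rw [hw1, hw2]
      push_cast at hc0 ⊢
      linear_combination hc0
    -- one step of the bad-state propagation
    have hstep : ∀ (k : ℕ) (g : Bool),
        ¬ (crisscross m n t).Reachable (mkV t 0 0 (by omega) false)
            (mkV t ((rD m n t)^[k] x) ((rD m n t)^[k] y) (hb k) g) →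
        ((t - n < (rD m n t)^[k] x ∧ n - t ≤ (rD m n t)^[k] y) ∨ ((rD m n t)^[k] x ≤ t - n ∧ (rD m n t)^[k] y < n - t)) ∧
        ∃ g' : Bool, ¬ (crisscross m n t).Reachable (mkV t 0 0 (by omega) false)
            (mkV t ((rD m n t)^[k+1] x) ((rD m n t)^[k+1] y) (hb (k+1)) g') := by
      intro k g hg
      obtain ⟨c', hc'⟩ := hdiag k
      have hbk := hb k
      by_cases hu : t - n < (rD m n t)^[k] x <;> by_cases hbY : (rD m n t)^[k] y < n - t
      · -- u = 1, b = 1 : T⁻¹ cross available, contradiction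
        exfalso
        apply hg
        have hadj := adj_Ti11 hm hn ht (hb k) hu hbY g
        have hr := ihj ((rD m n t)^[k] x - m) ((rD m n t)^[k] y + m) (by omega) (!g)
          ⟨c' + 2, by push_cast; linear_combination hc'⟩
        exact hr.trans hadj.symm.reachable
      · -- u = 1, b = 0
        refine ⟨Or.inl ⟨hu, by omega⟩, ?_⟩
        -- g must be true
        have hgtrue : g = true := by
          by_contra hgf
          have hgf' : g = false := by simpa using hgf
          subst hgf'
          apply hg
          have hadj := adj_Ti10 hm hn ht (hb k) hu (by omega)
          have hr := ihj ((rD m n t)^[k] x - m) ((rD m n t)^[k] y - n) (by omega) false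
            ⟨c' + 1, by push_cast; linear_combination hc'⟩
          exact hr.trans hadj.symm.reachable
        subst hgtrue
        by_cases hbX : (rD m n t)^[k] x < n - t
        · -- S10
          refine ⟨true, fun hr => hg ?_⟩
          have hadj := adj_S10 hm hn ht (hb k) hbX (by omega)
          have e : mkV t ((rD m n t)^[k+1] x) ((rD m n t)^[k+1] y) (hb (k+1)) true
              = mkV t ((rD m n t)^[k] x + m) ((rD m n t)^[k] y - n) (by omega) true := by
            refine mkV_congr ?_ ?_ rfl
            · rw [Function.iterate_succ_apply', rD]
              rw [if_neg (by omega)]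
            · rw [Function.iterate_succ_apply', rD]
              rw [if_pos (by omega)]
          rw [e] at hr
          exact hr.trans hadj.symm.reachable
        · -- S00, flips
          refine ⟨false, fun hr => hg ?_⟩
          have hadj := adj_S00 hm hn ht (hb k) (by omega) (by omega) true
          have e : mkV t ((rD m n t)^[k+1] x) ((rD m n t)^[k+1] y) (hb (k+1)) false
              = mkV t ((rD m n t)^[k] x - n) ((rD m n t)^[k] y - n) (by omega) (!true) := by
            refine mkV_congr ?_ ?_ rfl
            · rw [Function.iterate_succ_apply', rD, if_pos (by omega)]
            · rw [Function.iterate_succ_apply', rD, if_pos (by omega)]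
          rw [e] at hr
          exact hr.trans hadj.symm.reachable
      · -- u = 0, b = 1
        refine ⟨Or.inr ⟨by omega, hbY⟩, ?_⟩
        have hgfalse : g = false := by
          by_contra hgt
          have hgt' : g = true := by simpa using hgt
          subst hgt'
          apply hg
          have hadj := adj_Ti01 hm hn ht (hb k) (by omega) hbY
          have hr := ihj ((rD m n t)^[k] x + n) ((rD m n t)^[k] y + m) (by omega) true
            ⟨c' + 1, by push_cast; linear_combination hc'⟩
          exact hr.trans hadj.symm.reachable
        subst hgfalse
        by_cases hbX : (rD m n t)^[k] x < n - t
        · -- S11, flips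
          refine ⟨true, fun hr => hg ?_⟩
          have hadj := adj_S11 hm hn ht (hb k) hbX hbY false
          have e : mkV t ((rD m n t)^[k+1] x) ((rD m n t)^[k+1] y) (hb (k+1)) true
              = mkV t ((rD m n t)^[k] x + m) ((rD m n t)^[k] y + m) (by omega) (!false) := by
            refine mkV_congr ?_ ?_ rfl
            · rw [Function.iterate_succ_apply', rD, if_neg (by omega)]
            · rw [Function.iterate_succ_apply', rD, if_neg (by omega)]
          rw [e] at hr
          exact hr.trans hadj.symm.reachable
        · -- S01
          refine ⟨false, fun hr => hg ?_⟩
          have hadj := adj_S01 hm hn ht (hb k) (by omega) hbY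
          have e : mkV t ((rD m n t)^[k+1] x) ((rD m n t)^[k+1] y) (hb (k+1)) false
              = mkV t ((rD m n t)^[k] x - n) ((rD m n t)^[k] y + m) (by omega) false := by
            refine mkV_congr ?_ ?_ rfl
            · rw [Function.iterate_succ_apply', rD, if_pos (by omega)]
            · rw [Function.iterate_succ_apply', rD, if_neg (by omega)]
          rw [e] at hr
          exact hr.trans hadj.symm.reachable
      · -- u = 0, b = 0 : T⁻¹ cross available, contradiction
        exfalso
        apply hg
        have hadj := adj_Ti00 hm hn ht (hb k) (by omega) (by omega) g
        have hr := ihj ((rD m n t)^[k] x + n) ((rD m n t)^[k] y - n) (by omega) (!g)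
          ⟨c', by push_cast; linear_combination hc'⟩
        exact hr.trans hadj.symm.reachable
    -- all iterates are bad
    have key : ∀ k : ℕ, ∃ g : Bool, ¬ (crisscross m n t).Reachable
        (mkV t 0 0 (by omega) false) (mkV t ((rD m n t)^[k] x) ((rD m n t)^[k] y) (hb k) g) := by
      intro k
      induction k with
      | zero => exact ⟨f, hbad⟩
      | succ k ih =>
        obtain ⟨g, hg⟩ := ih
        exact (hstep k g hg).2
    have fact : ∀ k : ℕ,
        (t - n < (rD m n t)^[k] x ∧ n - t ≤ (rD m n t)^[k] y) ∨ ((rD m n t)^[k] x ≤ t - n ∧ (rD m n t)^[k] y < n - t) := by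
      intro k
      obtain ⟨g, hg⟩ := key k
      exact (hstep k g hg).1
    -- counting contradiction
    have cU : ((Finset.range (m + n).toNat).filter (fun k => t - n < (rD m n t)^[k] x)).card
        = n.toNat := by
      rw [card_filter_orbit hm hn ht hc hx (fun w => t - n < w)]
      have : (Finset.Icc (-t) t).filter (fun w => t - n < w) = Finset.Icc (t - n + 1) t := by
        ext w
        simp only [Finset.mem_filter, Finset.mem_Icc]
        omega
      rw [this, Int.card_Icc]
      omega
    have cB : ((Finset.range (m + n).toNat).filter (fun k => (rD m n t)^[k] y < n - t)).card
        = n.toNat := by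
      rw [card_filter_orbit hm hn ht hc hy (fun w => w < n - t)]
      have : (Finset.Icc (-t) t).filter (fun w => w < n - t) = Finset.Icc (-t) (n - t - 1) := by
        ext w
        simp only [Finset.mem_filter, Finset.mem_Icc]
        omega
      rw [this, Int.card_Icc]
      omega
    have csum : ((Finset.range (m + n).toNat).filter (fun k => t - n < (rD m n t)^[k] x)).card
        + ((Finset.range (m + n).toNat).filter (fun k => (rD m n t)^[k] y < n - t)).card
        = (m + n).toNat := by
      have hcong : (Finset.range (m + n).toNat).filter (fun k => (rD m n t)^[k] y < n - t)
          = (Finset.range (m + n).toNat).filter (fun k => ¬ (t - n < (rD m n t)^[k] x)) := by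
        apply Finset.filter_congr
        intro k _
        rcases fact k with ⟨h1, h2⟩ | ⟨h1, h2⟩ <;> simp <;> omega
      rw [hcong]
      have := Finset.card_filter_add_card_filter_not
        (s := Finset.range (m + n).toNat) (p := fun k => t - n < (rD m n t)^[k] x)
      simpa using this
    have hQ : ((m + n).toNat : ℤ) = 2 * t + 1 := by
      rw [Int.toNat_of_nonneg (by omega)]; omega
    omega
end Main
end CCAux

/-- Every crisscross graph `R(m, n)` (with `m`, `n` nonnegative, `gcd(m-n, m+n) = 1`
and `m + n = 2t + 1`) is connected. -/
theorem crisscross_connected (m n t : ℤ) (hm : 0 ≤ m) (hn : 0 ≤ n)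
    (hcop : Int.gcd (m - n) (m + n) = 1) (ht : m + n = 2 * t + 1) :
    (crisscross m n t).Connected := by
  obtain ⟨a, b, hab⟩ : IsCoprime (m - n) (m + n) := Int.isCoprime_iff_gcd_eq_one.mpr hcop
  have hc : IsCoprime (m + n) n := ⟨a + b, -2 * a, by linear_combination hab⟩
  have hc2 : IsCoprime (m + n) (2 * n) := ⟨a + b, -a, by linear_combination hab⟩
  obtain ⟨u, v, huv⟩ := hc2
  have hq0 : (0:ℤ) < m + n := by omega
  have hreach : ∀ w : CCVert t,
      (crisscross m n t).Reachable (CCAux.mkV t 0 0 (by omega) false) w := by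
    rintro ⟨⟨⟨x, y⟩, hb⟩, f⟩
    have hb' : -t ≤ x ∧ x ≤ t ∧ -t ≤ y ∧ y ≤ t := hb
    -- find j : ℕ with (m+n) ∣ (y - x - 2n j)
    set D := y - x with hD
    have hJnn : 0 ≤ (v * D) % (m + n) := Int.emod_nonneg _ (by omega)
    have hJdef : (v * D) % (m + n) = v * D - (m + n) * ((v * D) / (m + n)) := Int.emod_def _ _
    have hdvd : (m + n) ∣ (y - x - 2 * n * ((((v * D) % (m + n)).toNat : ℤ))) := by
      refine ⟨D * u + 2 * n * ((v * D) / (m + n)), ?_⟩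
      rw [Int.toNat_of_nonneg hJnn, hJdef, hD]
      linear_combination (-(y - x)) * huv
    exact CCAux.main_induction hm hn ht hc ((v * D) % (m + n)).toNat x y hb' f hdvd
  rw [SimpleGraph.connected_iff]
  exact ⟨fun w1 w2 => (hreach w1).symm.trans (hreach w2),
    ⟨CCAux.mkV t 0 0 (by omega) false⟩⟩
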